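/- Let φ be the Laplace exponent of a driftless subordinator. Then limsup_{λ→∞} φ(2λ)/φ(λ) < 2 if and only if limsup_{λ→∞} λφ'(λ)/φ(λ) < 1. -/

import Mathlib

open MeasureTheory Set Filter

private lemma exp_aux1 (x : ℝ) (_hx : 0 ≤ x) :
    Real.exp (-x) - Real.exp (-(2 * x)) ≤ x * Real.exp (-x) := by
  have h1 : Real.exp (-(2 * x)) = Real.exp (-x) * Real.exp (-x) := by
    rw [← Real.exp_add]; ring_nf
  have h2 := Real.add_one_le_exp (-x)
  nlinarith [Real.exp_pos (-x)]

private lemma exp_aux2 (x : ℝ) (_hx : 0 ≤ x) :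
    x * Real.exp (-(2 * x)) ≤ Real.exp (-x) - Real.exp (-(2 * x)) := by
  have h1 : Real.exp x * Real.exp (-(2 * x)) = Real.exp (-x) := by
    rw [← Real.exp_add]; ring_nf
  have h2 := Real.add_one_le_exp x
  nlinarith [Real.exp_pos (-(2 * x))]

private lemma exp_aux3 (x : ℝ) (_hx : 0 ≤ x) : x * Real.exp (-x) ≤ 1 := by
  have h1 : Real.exp x * Real.exp (-x) = 1 := by rw [← Real.exp_add]; ring_nf; exact Real.exp_zero
  have h2 := Real.add_one_le_exp x
  nlinarith [Real.exp_pos (-x)]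

theorem doubling_iff_deriv_ratio
    (q : ℝ) (hq : 0 ≤ q)
    (μ : Measure ℝ)
    (hμ : ∫⁻ y in Set.Ioi (0:ℝ), ENNReal.ofReal (min y 1) ∂μ < ⊤)
    (φ : ℝ → ℝ)
    (hφ : ∀ l : ℝ, 0 < l →
      φ l = q + ∫ y in Set.Ioi (0:ℝ), (1 - Real.exp (-(l * y))) ∂μ)
    (hint : ∀ l : ℝ, 0 < l →
      IntegrableOn (fun y => 1 - Real.exp (-(l * y))) (Set.Ioi 0) μ)
    (hpos : ∀ l : ℝ, 0 < l → 0 < φ l)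
    (hderiv : ∀ l : ℝ, 0 < l →
      HasDerivAt φ (∫ y in Set.Ioi (0:ℝ), y * Real.exp (-(l * y)) ∂μ) l) :
    Filter.limsup (fun l : ℝ => φ (2 * l) / φ l) atTop < 2
      ↔ Filter.limsup (fun l : ℝ => l * deriv φ l / φ l) atTop < 1 := by
  -- integrability of min y 1
  have hmin : IntegrableOn (fun y => min y 1) (Set.Ioi 0) μ := by
    refine ⟨(continuous_id.min continuous_const).aestronglyMeasurable, ?_⟩
    rw [hasFiniteIntegral_iff_ofReal ?_]
    · exact hμ
    · filter_upwards [ae_restrict_mem measurableSet_Ioi] with y hy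
      exact le_min hy.le zero_le_one
  -- integrability of y * exp(-l y)
  have hyint : ∀ l : ℝ, 0 < l →
      IntegrableOn (fun y => y * Real.exp (-(l * y))) (Set.Ioi 0) μ := by
    intro l hl
    refine Integrable.mono' (hmin.const_mul (max 1 l⁻¹)) ?_ ?_
    · exact (continuous_id.mul (Real.continuous_exp.comp (by continuity))).aestronglyMeasurable
    · filter_upwards [ae_restrict_mem measurableSet_Ioi] with y hy
      have hy0 : (0:ℝ) < y := hy
      have hexp : (0:ℝ) < Real.exp (-(l * y)) := Real.exp_pos _
      rw [Real.norm_eq_abs, abs_of_nonneg (by positivity)]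
      have hmax1 : (1:ℝ) ≤ max 1 l⁻¹ := le_max_left _ _
      rcases le_total y 1 with hy1 | hy1
      · have hmy : min y 1 = y := min_eq_left hy1
        have he1 : Real.exp (-(l * y)) ≤ 1 := by
          rw [show (1:ℝ) = Real.exp 0 from Real.exp_zero.symm]
          exact Real.exp_le_exp.mpr (by nlinarith)
        rw [hmy]
        nlinarith
      · have hmy : min y 1 = 1 := min_eq_right hy1
        have hkey := exp_aux3 (l * y) (by positivity)
        have hli : l⁻¹ ≤ max 1 l⁻¹ := le_max_right _ _
        have hl0 : (0:ℝ) < l := hl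
        rw [hmy, mul_one]
        -- y * exp(-(l*y)) ≤ l⁻¹ since (l*y)*exp(-(l*y)) ≤ 1
        have : y * Real.exp (-(l * y)) ≤ l⁻¹ := by
          rw [← mul_le_mul_iff_of_pos_left hl0, mul_inv_cancel₀ hl0.ne', ← mul_assoc]
          exact hkey
        linarith
  -- the key integral identity
  have hkey_eq : ∀ l : ℝ, 0 < l → φ (2 * l) - φ l =
      ∫ y in Set.Ioi (0:ℝ), (Real.exp (-(l * y)) - Real.exp (-(2 * l * y))) ∂μ := by
    intro l hl
    have h2l : (0:ℝ) < 2 * l := by linarith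
    rw [hφ (2 * l) h2l, hφ l hl]
    have hsub := integral_sub (hint (2 * l) h2l) (hint l hl)
    have heq : ∫ y in Set.Ioi (0:ℝ),
        ((1 - Real.exp (-(2 * l * y))) - (1 - Real.exp (-(l * y)))) ∂μ =
        ∫ y in Set.Ioi (0:ℝ), (Real.exp (-(l * y)) - Real.exp (-(2 * l * y))) ∂μ := by
      apply integral_congr_ae
      filter_upwards with y
      ring
    rw [← heq, hsub]
    ring
  -- integrability of the difference
  have hdiff_int : ∀ l : ℝ, 0 < l →
      IntegrableOn (fun y => Real.exp (-(l * y)) - Real.exp (-(2 * l * y))) (Set.Ioi 0) μ := by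
    intro l hl
    have h := (hint (2 * l) (by linarith)).sub (hint l hl)
    exact h.congr (by filter_upwards with y; simp only [Pi.sub_apply]; ring)
  -- inequality 1: φ(2l) - φ(l) ≤ l * φ'(l)
  have ineq1 : ∀ l : ℝ, 0 < l → φ (2 * l) - φ l ≤ l * deriv φ l := by
    intro l hl
    rw [hkey_eq l hl, (hderiv l hl).deriv, ← integral_const_mul]
    apply setIntegral_mono_on (hdiff_int l hl) ((hyint l hl).const_mul l) measurableSet_Ioi
    intro y hy
    have hy0 : (0:ℝ) < y := hy
    have h := exp_aux1 (l * y) (by positivity)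
    have he : -(2 * (l * y)) = -(2 * l * y) := by ring
    rw [he] at h
    calc Real.exp (-(l * y)) - Real.exp (-(2 * l * y)) ≤ l * y * Real.exp (-(l * y)) := h
      _ = l * (y * Real.exp (-(l * y))) := by ring
  -- inequality 2: l * φ'(2l) ≤ φ(2l) - φ(l)
  have ineq2 : ∀ l : ℝ, 0 < l → l * deriv φ (2 * l) ≤ φ (2 * l) - φ l := by
    intro l hl
    have h2l : (0:ℝ) < 2 * l := by linarith
    rw [hkey_eq l hl, (hderiv (2 * l) h2l).deriv, ← integral_const_mul]
    apply setIntegral_mono_on ((hyint (2 * l) h2l).const_mul l) (hdiff_int l hl) measurableSet_Ioi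
    intro y hy
    have hy0 : (0:ℝ) < y := hy
    have h := exp_aux2 (l * y) (by positivity)
    have he : -(2 * (l * y)) = -(2 * l * y) := by ring
    rw [he] at h
    calc l * (y * Real.exp (-(2 * l * y))) = l * y * Real.exp (-(2 * l * y)) := by ring
      _ ≤ Real.exp (-(l * y)) - Real.exp (-(2 * l * y)) := h
  -- the deriv ratio is always at most 2
  have hB2 : ∀ l : ℝ, 0 < l → l * deriv φ l / φ l ≤ 2 := by
    intro l hl
    have hl2 : (0:ℝ) < l / 2 := by linarith
    have h := ineq2 (l / 2) hl2
    rw [show 2 * (l / 2) = l by ring] at h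
    have hφl := hpos l hl
    have hφl2 := hpos (l / 2) hl2
    rw [div_le_iff₀ hφl]
    linarith
  -- the doubling ratio is always at most 3
  have hA3 : ∀ l : ℝ, 0 < l → φ (2 * l) / φ l ≤ 3 := by
    intro l hl
    have h1 := ineq1 l hl
    have h2 := hB2 l hl
    have hφl := hpos l hl
    rw [div_le_iff₀ hφl] at h2 ⊢
    linarith
  -- nonnegativity
  have hA0 : ∀ᶠ l : ℝ in atTop, (0:ℝ) ≤ φ (2 * l) / φ l := by
    filter_upwards [eventually_gt_atTop (0:ℝ)] with l hl
    exact div_nonneg (hpos (2 * l) (by linarith)).le (hpos l hl).le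
  have hderiv_nonneg : ∀ l : ℝ, 0 < l → 0 ≤ deriv φ l := by
    intro l hl
    rw [(hderiv l hl).deriv]
    apply setIntegral_nonneg measurableSet_Ioi
    intro y hy
    exact mul_nonneg (le_of_lt hy) (Real.exp_pos _).le
  have hB0 : ∀ᶠ l : ℝ in atTop, (0:ℝ) ≤ l * deriv φ l / φ l := by
    filter_upwards [eventually_gt_atTop (0:ℝ)] with l hl
    exact div_nonneg (mul_nonneg hl.le (hderiv_nonneg l hl)) (hpos l hl).le
  constructor
  · -- doubling < 2 → deriv ratio < 1
    intro h
    set L := Filter.limsup (fun l : ℝ => φ (2 * l) / φ l) atTop with hL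
    set c : ℝ := max ((L + 2) / 2) (3 / 2) with hc
    have hc2 : c < 2 := max_lt (by linarith) (by norm_num)
    have hc1 : (1:ℝ) < c := lt_of_lt_of_le (by norm_num) (le_max_right _ _)
    have hc0 : (0:ℝ) < c := by linarith
    have hlt : L < c := lt_of_lt_of_le (by linarith) (le_max_left _ _)
    have hbdd : IsBoundedUnder (· ≤ ·) atTop (fun l : ℝ => φ (2 * l) / φ l) :=
      ⟨3, eventually_map.2 (by
            filter_upwards [eventually_gt_atTop (0:ℝ)] with l hl
            exact hA3 l hl)⟩
    have hev : ∀ᶠ l : ℝ in atTop, φ (2 * l) / φ l < c :=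
      Filter.eventually_lt_of_limsup_lt hlt hbdd
    have htend : Tendsto (fun l : ℝ => l / 2) atTop atTop :=
      tendsto_id.atTop_div_const (by norm_num)
    have hevB : ∀ᶠ l : ℝ in atTop, l * deriv φ l / φ l ≤ 2 * (c - 1) / c := by
      filter_upwards [eventually_gt_atTop (0:ℝ), htend.eventually hev] with l hl hlc
      have hl2 : (0:ℝ) < l / 2 := by linarith
      have hkey := ineq2 (l / 2) hl2
      rw [show 2 * (l / 2) = l by ring] at hkey hlc
      have hφl := hpos l hl
      have hφl2 := hpos (l / 2) hl2
      rw [div_lt_iff₀ hφl2] at hlc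
      rw [div_le_div_iff₀ hφl hc0]
      nlinarith [mul_le_mul_of_nonneg_left hkey hc0.le]
    have hls : Filter.limsup (fun l : ℝ => l * deriv φ l / φ l) atTop ≤ 2 * (c - 1) / c :=
      Filter.limsup_le_of_le (Filter.isCoboundedUnder_le_of_eventually_le atTop hB0) hevB
    have : 2 * (c - 1) / c < 1 := by
      rw [div_lt_one hc0]; linarith
    linarith
  · -- deriv ratio < 1 → doubling < 2
    intro h
    set L := Filter.limsup (fun l : ℝ => l * deriv φ l / φ l) atTop with hL
    set c : ℝ := max ((L + 1) / 2) 0 with hc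
    have hc1 : c < 1 := max_lt (by linarith) one_pos
    have hlt : L < c := lt_of_lt_of_le (by linarith) (le_max_left _ _)
    have hbdd : IsBoundedUnder (· ≤ ·) atTop (fun l : ℝ => l * deriv φ l / φ l) :=
      ⟨2, eventually_map.2 (by
            filter_upwards [eventually_gt_atTop (0:ℝ)] with l hl
            exact hB2 l hl)⟩
    have hev : ∀ᶠ l : ℝ in atTop, l * deriv φ l / φ l < c :=
      Filter.eventually_lt_of_limsup_lt hlt hbdd
    have hevA : ∀ᶠ l : ℝ in atTop, φ (2 * l) / φ l ≤ 1 + c := by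
      filter_upwards [eventually_gt_atTop (0:ℝ), hev] with l hl hb
      have h1 := ineq1 l hl
      have hφl := hpos l hl
      rw [div_lt_iff₀ hφl] at hb
      rw [div_le_iff₀ hφl]
      linarith
    have hls : Filter.limsup (fun l : ℝ => φ (2 * l) / φ l) atTop ≤ 1 + c :=
      Filter.limsup_le_of_le (Filter.isCoboundedUnder_le_of_eventually_le atTop hA0) hevA
    linarith
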